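/- Let μ be a finitely additive, monotone, finitely subadditive set function on subsets of a compact metrizable space X defined on closed sets via outer approximation by open sets. If F is closed and F = ⋃_{n=1}^∞ F_n for an increasing sequence of closed sets F_n, then μ(F) = sup_n μ(F_n). -/

import Mathlib

open scoped Pointwise NNReal ENNReal

variable {X : Type*} [TopologicalSpace X] {G : Type*} [Group G] [MulAction G X]

/-- The open support of a continuous `ℝ≥0`-valued function. -/
def osupp (f : C(X, ℝ≥0)) : Set X := {x | f x ≠ 0}

/-- Dynamical subequivalence `A ≼ B` for two finite tuples (lists) of subsets of `X`. -/
def SetSubeq (G : Type*) [Group G] [MulAction G X] (A B : List (Set X)) : Prop :=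
  ∀ F : Fin A.length → Set X,
    (∀ i, IsClosed (F i) ∧ F i ⊆ A.get i) →
    ∃ (J : Fin A.length → ℕ)
      (U : (i : Fin A.length) → Fin (J i) → Set X)
      (s : (i : Fin A.length) → Fin (J i) → G)
      (k : (i : Fin A.length) → Fin (J i) → Fin B.length),
      (∀ i j, IsOpen (U i j)) ∧
      (∀ i, F i ⊆ ⋃ j, U i j) ∧
      (∀ i j, (s i j) • U i j ⊆ B.get (k i j)) ∧
      (∀ (p q : Σ i : Fin A.length, Fin (J i)), p ≠ q → k p.1 p.2 = k q.1 q.2 →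
        Disjoint ((s p.1 p.2) • U p.1 p.2) ((s q.1 q.2) • U q.1 q.2))

/-- Dynamical subequivalence `a ≼ b` for tuples of nonnegative continuous functions. -/
def DynSubeq (G : Type*) [Group G] [MulAction G X] (a b : List C(X, ℝ≥0)) : Prop :=
  SetSubeq G (a.map osupp) (b.map osupp)

/-- The entrywise cut-down `(f - ε)₊`. -/
noncomputable def cutFun (f : C(X, ℝ≥0)) (ε : ℝ≥0) : C(X, ℝ≥0) :=
  ⟨fun x => f x - ε, f.continuous.sub continuous_const⟩

noncomputable def cutList (a : List C(X, ℝ≥0)) (ε : ℝ≥0) : List C(X, ℝ≥0) := a.map (cutFun · ε)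

/-- Membership in the algebra of sets generated by the open sets of `X`. -/
def InAlg (X : Type*) [TopologicalSpace X] (s : Set X) : Prop :=
  s ∈ MeasureTheory.generateSetAlgebra {t : Set X | IsOpen t}

/-- A `G`-invariant regular premeasure on the algebra generated by the open sets. -/
structure InvRegPremeasure (X : Type*) [TopologicalSpace X] (G : Type*) [Group G]
    [MulAction G X] where
  m : Set X → ℝ≥0∞
  junk : ∀ s : Set X, ¬ InAlg X s → m s = 0
  empty' : m ∅ = 0
  countably_additive : ∀ A : ℕ → Set X, (∀ n, InAlg X (A n)) →
    Pairwise (Function.onFun Disjoint A) → InAlg X (⋃ n, A n) →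
    m (⋃ n, A n) = ∑' n, m (A n)
  invariant : ∀ (g : G) (s : Set X), InAlg X s → m (g • s) = m s
  inner_regular : ∀ s : Set X, InAlg X s →
    m s = ⨆ (F : Set X) (_ : IsCompact F ∧ F ⊆ s), m F
  outer_regular : ∀ s : Set X, InAlg X s →
    m s = ⨅ (O : Set X) (_ : IsOpen O ∧ s ⊆ O), m O

/-- A state on the generalized type semigroup `W(X, G)`, described at the level of
`K(X, G)`: a function on tuples which is monotone for `≼`, additive for concatenation,
and vanishes on the empty tuple. -/
structure DynState (X : Type*) [TopologicalSpace X] (G : Type*) [Group G]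
    [MulAction G X] where
  toFun : List C(X, ℝ≥0) → ℝ≥0∞
  mono : ∀ a b, DynSubeq G a b → toFun a ≤ toFun b
  additive : ∀ a b, toFun (a ++ b) = toFun a + toFun b
  zero' : toFun [] = 0

/-- Lower semicontinuity of a state. -/
def DynState.LSC (D : DynState X G) : Prop :=
  ∀ a, D.toFun a = ⨆ (ε : ℝ≥0) (_ : 0 < ε), D.toFun (cutList a ε)

/-- **Claim 1 in Lemma 3.6.** Let `m` be a `[0,∞]`-valued set function on the open sets of a
compact metrizable space which is monotone, finitely subadditive and additive on disjoint
open sets, and extend it to closed sets by outer approximation: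
`μc F = inf { m O : F ⊆ O open }`. If `F` is closed and `F = ⋃ₙ Fₙ` for an increasing
sequence of closed sets `Fₙ`, then `μc F = supₙ μc Fₙ`. -/
theorem closed_outer_continuity {X : Type*} [TopologicalSpace X] [CompactSpace X]
    [TopologicalSpace.MetrizableSpace X]
    (m : Set X → ℝ≥0∞)
    (hmono : ∀ O₁ O₂ : Set X, IsOpen O₁ → IsOpen O₂ → O₁ ⊆ O₂ → m O₁ ≤ m O₂)
    (hsubadd : ∀ O₁ O₂ : Set X, IsOpen O₁ → IsOpen O₂ → m (O₁ ∪ O₂) ≤ m O₁ + m O₂)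
    (hadd : ∀ O₁ O₂ : Set X, IsOpen O₁ → IsOpen O₂ → Disjoint O₁ O₂ →
      m (O₁ ∪ O₂) = m O₁ + m O₂)
    (μc : Set X → ℝ≥0∞)
    (hμc : ∀ F : Set X, μc F = ⨅ (O : Set X) (_ : IsOpen O ∧ F ⊆ O), m O)
    (F : Set X) (hF : IsClosed F) (Fn : ℕ → Set X) (hFn : ∀ n, IsClosed (Fn n))
    (hinc : Monotone Fn) (hU : F = ⋃ n, Fn n) :
    μc F = ⨆ n, μc (Fn n) := by
  classical
  -- basic properties of μc
  have μc_mono : ∀ A B : Set X, A ⊆ B → μc A ≤ μc B := by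
    intro A B h
    rw [hμc, hμc]
    exact le_iInf₂ fun O hO => iInf₂_le O ⟨hO.1, h.trans hO.2⟩
  have μc_le_m : ∀ (C O : Set X), IsOpen O → C ⊆ O → μc C ≤ m O := by
    intro C O h1 h2
    rw [hμc]
    exact iInf₂_le O ⟨h1, h2⟩
  have hFnF : ∀ n, Fn n ⊆ F := by
    intro n; rw [hU]; exact Set.subset_iUnion Fn n
  set t := ⨆ n, μc (Fn n) with ht_def
  have h_ge : t ≤ μc F := iSup_le fun n => μc_mono _ _ (hFnF n)
  refine le_antisymm ?_ h_ge
  -- main direction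
  refine ENNReal.le_of_forall_pos_le_add ?_
  intro ε hε htop
  set δ : ℝ≥0∞ := (ε : ℝ≥0∞) / 3 with hδ_def
  have hδ0 : δ ≠ 0 := by
    simp [hδ_def, ENNReal.div_eq_zero_iff]
    exact_mod_cast hε.ne'
  have hδtop : δ ≠ ⊤ := by
    simp only [hδ_def]
    exact (ENNReal.div_lt_top ENNReal.coe_ne_top (by norm_num)).ne
  have hteach : ∀ n, μc (Fn n) ≠ ⊤ := fun n => ((le_iSup (fun n => μc (Fn n)) n).trans_lt htop).ne
  -- the epsilons
  set e : ℕ → ℝ≥0∞ := fun k => δ * 2⁻¹ ^ (k + 1) with he_def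
  have he0 : ∀ k, e k ≠ 0 := by
    intro k
    simp [he_def, hδ0, pow_ne_zero, ENNReal.inv_ne_zero]
  have hetop : ∀ k, e k ≠ ⊤ := by
    intro k
    refine ENNReal.mul_ne_top hδtop ?_
    exact ENNReal.pow_ne_top (by simp)
  have he_sum : ∀ K : ℕ, ∑ k ∈ Finset.range K, e k ≤ δ := by
    intro K
    calc ∑ k ∈ Finset.range K, e k ≤ ∑' k, e k := ENNReal.sum_le_tsum _
      _ = δ * (2⁻¹ * ∑' k : ℕ, 2⁻¹ ^ k) := by
          simp only [he_def, pow_succ', ENNReal.tsum_mul_left]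
      _ = δ := by
          rw [ENNReal.tsum_geometric, ENNReal.one_sub_inv_two, inv_inv,
            ENNReal.inv_mul_cancel (by norm_num) (by norm_num), mul_one]
  have he_mono : ∀ k, e (k + 1) ≤ e k := by
    intro k
    exact mul_le_mul_right (pow_le_pow_of_le_one zero_le (by simp [ENNReal.inv_le_one]) (by omega)) δ
  -- choose open W k ⊇ Fn k with controlled measure
  have exW : ∀ k, ∃ W : Set X, (IsOpen W ∧ Fn k ⊆ W) ∧ m W ≤ μc (Fn k) + e k := by
    intro k
    have hlt : μc (Fn k) < μc (Fn k) + e k := ENNReal.lt_add_right (hteach k) (he0 k)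
    rw [hμc (Fn k)] at hlt
    rw [iInf_lt_iff] at hlt
    obtain ⟨W, hW⟩ := hlt
    rw [iInf_lt_iff] at hW
    obtain ⟨hW1, hW2⟩ := hW
    refine ⟨W, hW1, ?_⟩
    rw [hμc (Fn k)]
    exact hW2.le
  choose W hW hWm using exW
  have hWopen : ∀ k, IsOpen (W k) := fun k => (hW k).1
  have hWsub : ∀ k, Fn k ⊆ W k := fun k => (hW k).2
  -- interpolate: Fn k ⊆ A k ⊆ closure (A k) ⊆ W k
  have exA : ∀ k, ∃ A : Set X, IsOpen A ∧ Fn k ⊆ A ∧ closure A ⊆ W k :=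
    fun k => normal_exists_closure_subset (hFn k) (hWopen k) (hWsub k)
  choose A hAopen hAsub hAcl using exA
  -- the rings
  set R : ℕ → Set X := fun k => (F ∩ closure (A (k + 1))) \ ⋃ i ∈ Finset.range (k + 1), A i
    with hR_def
  have hRclosed : ∀ k, IsClosed (R k) :=
    fun k => (hF.inter isClosed_closure).sdiff (isOpen_biUnion fun i _ => hAopen i)
  have hRsubW : ∀ k, R k ⊆ W (k + 1) := by
    intro k x hx
    exact hAcl (k + 1) hx.1.2
  -- superadditivity for the disjoint closed pair (R k, Fn k) inside W (k+1)
  have key : ∀ k, μc (R k) + μc (Fn k) ≤ μc (Fn (k + 1)) + e (k + 1) := by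
    intro k
    have hdisj : Disjoint (R k) (Fn k) := by
      rw [Set.disjoint_left]
      intro x hx hx'
      exact hx.2 (Set.mem_biUnion (Finset.self_mem_range_succ k) (hAsub k hx'))
    obtain ⟨U, V, hUo, hVo, hRU, hFV, hUV⟩ :=
      NormalSpace.normal (R k) (Fn k) (hRclosed k) (hFn k) hdisj
    have h1 : μc (R k) ≤ m (W (k + 1) ∩ U) :=
      μc_le_m _ _ ((hWopen (k + 1)).inter hUo) (Set.subset_inter (hRsubW k) hRU)
    have h2 : μc (Fn k) ≤ m (W (k + 1) ∩ V) :=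
      μc_le_m _ _ ((hWopen (k + 1)).inter hVo)
        (Set.subset_inter ((hinc (Nat.le_succ k)).trans (hWsub (k + 1))) hFV)
    calc μc (R k) + μc (Fn k) ≤ m (W (k + 1) ∩ U) + m (W (k + 1) ∩ V) := add_le_add h1 h2
      _ = m ((W (k + 1) ∩ U) ∪ (W (k + 1) ∩ V)) := by
          rw [hadd _ _ ((hWopen (k + 1)).inter hUo) ((hWopen (k + 1)).inter hVo)
            (hUV.mono Set.inter_subset_right Set.inter_subset_right)]
      _ ≤ m (W (k + 1)) := hmono _ _ (((hWopen (k + 1)).inter hUo).union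
            ((hWopen (k + 1)).inter hVo)) (hWopen (k + 1))
            (Set.union_subset Set.inter_subset_left Set.inter_subset_left)
      _ ≤ μc (Fn (k + 1)) + e (k + 1) := hWm (k + 1)
  -- telescoping bound for sums of ring measures
  have ind : ∀ K : ℕ, μc (Fn 0) + ∑ k ∈ Finset.range K, μc (R k) ≤
      μc (Fn K) + ∑ k ∈ Finset.range K, e (k + 1) := by
    intro K
    induction K with
    | zero => simp
    | succ K ih =>
      rw [Finset.sum_range_succ, Finset.sum_range_succ, ← add_assoc]
      calc μc (Fn 0) + ∑ k ∈ Finset.range K, μc (R k) + μc (R K)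
          ≤ μc (Fn K) + ∑ k ∈ Finset.range K, e (k + 1) + μc (R K) := add_le_add_left ih _
        _ = (μc (R K) + μc (Fn K)) + ∑ k ∈ Finset.range K, e (k + 1) := by ring
        _ ≤ (μc (Fn (K + 1)) + e (K + 1)) + ∑ k ∈ Finset.range K, e (k + 1) :=
            add_le_add_left (key K) _
        _ = μc (Fn (K + 1)) + (∑ k ∈ Finset.range K, e (k + 1) + e (K + 1)) := by ring
  -- μc (R k) is finite, choose open O k ⊇ R k approximating
  have hRfin : ∀ k, μc (R k) ≠ ⊤ := by
    intro k
    refine ne_top_of_le_ne_top ?_ ((μc_le_m _ _ (hWopen (k + 1)) (hRsubW k)).trans (hWm (k + 1)))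
    exact ENNReal.add_ne_top.mpr ⟨hteach (k + 1), hetop (k + 1)⟩
  have exO : ∀ k, ∃ O : Set X, (IsOpen O ∧ R k ⊆ O) ∧ m O ≤ μc (R k) + e k := by
    intro k
    have hlt : μc (R k) < μc (R k) + e k := ENNReal.lt_add_right (hRfin k) (he0 k)
    rw [hμc (R k)] at hlt
    rw [iInf_lt_iff] at hlt
    obtain ⟨O, hO⟩ := hlt
    rw [iInf_lt_iff] at hO
    obtain ⟨hO1, hO2⟩ := hO
    refine ⟨O, hO1, ?_⟩
    rw [hμc (R k)]
    exact hO2.le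
  choose O hO hOm using exO
  have hOopen : ∀ k, IsOpen (O k) := fun k => (hO k).1
  have hRO : ∀ k, R k ⊆ O k := fun k => (hO k).2
  -- the cover of F
  have hcover : F ⊆ ⋃ k : ℕ, (A 0 ∪ O k) := by
    intro x hx
    by_cases h0 : x ∈ A 0
    · exact Set.mem_iUnion.2 ⟨0, Or.inl h0⟩
    · have hex : ∃ i, x ∈ A i := by
        rw [hU] at hx
        obtain ⟨n, hn⟩ := Set.mem_iUnion.1 hx
        exact ⟨n, hAsub n hn⟩
      obtain ⟨k, hk⟩ : ∃ k, Nat.find hex = k + 1 := by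
        have : Nat.find hex ≠ 0 := by
          intro h
          exact h0 (h ▸ Nat.find_spec hex)
        exact Nat.exists_eq_succ_of_ne_zero this
      have hxA : x ∈ A (k + 1) := hk ▸ Nat.find_spec hex
      have hxR : x ∈ R k := by
        refine ⟨⟨hx, subset_closure hxA⟩, ?_⟩
        intro hmem
        obtain ⟨i, hi, hxi⟩ := Set.mem_iUnion₂.1 hmem
        have : i < Nat.find hex := by
          rw [hk]; exact Finset.mem_range.1 hi
        exact Nat.find_min hex this hxi
      exact Set.mem_iUnion.2 ⟨k, Or.inr (hRO k hxR)⟩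
  obtain ⟨S, hS⟩ := (hF.isCompact).elim_finite_subcover (fun k => A 0 ∪ O k)
    (fun k => (hAopen 0).union (hOopen k)) hcover
  set K : ℕ := S.sup id + 1 with hK_def
  have hS' : F ⊆ A 0 ∪ ⋃ k ∈ Finset.range K, O k := by
    intro x hx
    obtain ⟨k, hkS, hk⟩ := Set.mem_iUnion₂.1 (hS hx)
    rcases hk with h | h
    · exact Or.inl h
    · exact Or.inr (Set.mem_biUnion (Finset.mem_range.2 (Nat.lt_succ_of_le (Finset.le_sup (f := id) hkS))) h)
  -- finite subadditivity
  have finsub : ∀ N : ℕ, m (A 0 ∪ ⋃ k ∈ Finset.range N, O k) ≤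
      m (A 0) + ∑ k ∈ Finset.range N, m (O k) := by
    intro N
    induction N with
    | zero => simp
    | succ N ih =>
      have hset : (A 0 ∪ ⋃ k ∈ Finset.range (N + 1), O k) =
          (A 0 ∪ ⋃ k ∈ Finset.range N, O k) ∪ O N := by
        rw [Finset.range_add_one, Finset.set_biUnion_insert,
          Set.union_comm (O N) (⋃ k ∈ Finset.range N, O k), ← Set.union_assoc]
      rw [hset, Finset.sum_range_succ]
      calc m ((A 0 ∪ ⋃ k ∈ Finset.range N, O k) ∪ O N)
          ≤ m (A 0 ∪ ⋃ k ∈ Finset.range N, O k) + m (O N) :=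
            hsubadd _ _ ((hAopen 0).union (isOpen_biUnion fun i _ => hOopen i)) (hOopen N)
        _ ≤ m (A 0) + ∑ k ∈ Finset.range N, m (O k) + m (O N) := add_le_add_left ih _
        _ = _ := by ring
  -- put everything together
  have main : μc F ≤ t + 3 * δ := by
    have hbig : IsOpen (A 0 ∪ ⋃ k ∈ Finset.range K, O k) :=
      (hAopen 0).union (isOpen_biUnion fun i _ => hOopen i)
    calc μc F ≤ m (A 0 ∪ ⋃ k ∈ Finset.range K, O k) := μc_le_m _ _ hbig hS'
      _ ≤ m (A 0) + ∑ k ∈ Finset.range K, m (O k) := finsub K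
      _ ≤ m (W 0) + ∑ k ∈ Finset.range K, (μc (R k) + e k) := by
          refine add_le_add (hmono _ _ (hAopen 0) (hWopen 0)
            ((subset_closure).trans (hAcl 0))) (Finset.sum_le_sum fun k _ => hOm k)
      _ ≤ (μc (Fn 0) + e 0) + (∑ k ∈ Finset.range K, μc (R k) +
            ∑ k ∈ Finset.range K, e k) := by
          rw [Finset.sum_add_distrib]
          exact add_le_add (hWm 0) le_rfl
      _ = (μc (Fn 0) + ∑ k ∈ Finset.range K, μc (R k)) +
            (e 0 + ∑ k ∈ Finset.range K, e k) := by ring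
      _ ≤ (μc (Fn K) + ∑ k ∈ Finset.range K, e (k + 1)) + (δ + δ) := by
          refine add_le_add (ind K) (add_le_add ?_ (he_sum K))
          calc e 0 = δ * 2⁻¹ ^ 1 := rfl
            _ ≤ δ * 1 := mul_le_mul_right (by simp [ENNReal.inv_le_one]) δ
            _ = δ := mul_one δ
      _ ≤ (t + δ) + (δ + δ) := by
          refine add_le_add (add_le_add (le_iSup (fun n => μc (Fn n)) K) ?_) le_rfl
          exact le_trans (Finset.sum_le_sum fun k _ => he_mono k) (he_sum K)
      _ = t + 3 * δ := by ring
  have h3δ : 3 * δ ≤ (ε : ℝ≥0∞) := by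
    rw [hδ_def, mul_comm, ENNReal.div_mul_cancel (by norm_num) (by norm_num)]
  exact main.trans (add_le_add le_rfl h3δ)
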